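/- For every rational number c with c ≠ -3/4, the set {t ∈ ℚ : t^2 ≠ 1 and 3t^4 + 10t^2 + 3 + 4c(t^2 - 1)^2 = 0} (that is, the set of rational t with -(3t^4 + 10t^2 + 3)/(4(t^2 - 1)^2) = c) is either empty or has exactly 4 elements. -/

import Mathlib

theorem stmt7 (c : ℚ) (hc : c ≠ -3/4) :
    {t : ℚ | t^2 ≠ 1 ∧ 3*t^4 + 10*t^2 + 3 + 4*c*(t^2 - 1)^2 = 0} = ∅ ∨
      {t : ℚ | t^2 ≠ 1 ∧ 3*t^4 + 10*t^2 + 3 + 4*c*(t^2 - 1)^2 = 0}.ncard = 4 := by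
  set S : Set ℚ := {t : ℚ | t^2 ≠ 1 ∧ 3*t^4 + 10*t^2 + 3 + 4*c*(t^2 - 1)^2 = 0} with hS
  have hac : (3 + 4*c) ≠ 0 := by
    intro h; apply hc; linarith
  rcases S.eq_empty_or_nonempty with h | ⟨t₀, ht₀⟩
  · exact Or.inl h
  · right
    obtain ⟨ht₀1, ht₀e⟩ := ht₀
    have ht₀0 : t₀ ≠ 0 := by
      intro h; rw [h] at ht₀e; apply hac; nlinarith
    have hsq : t₀^2 ≠ -1 := by
      intro h; nlinarith [sq_nonneg t₀]
    have hSeq : S = {t₀, -t₀, t₀⁻¹, -t₀⁻¹} := by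
      ext t
      constructor
      · rintro ⟨ht1, hte⟩
        have key : (3 + 4*c) * ((t^2 - t₀^2) * (t^2*t₀^2 - 1)) = 0 := by
          linear_combination t₀^2 * hte - t^2 * ht₀e
        have key2 : (t^2 - t₀^2) * (t^2*t₀^2 - 1) = 0 :=
          (mul_eq_zero.mp key).resolve_left hac
        rcases mul_eq_zero.mp key2 with h | h
        · have : (t - t₀) * (t + t₀) = 0 := by linear_combination h
          rcases mul_eq_zero.mp this with h | h
          · left; linarith
          · right; left; linarith
        · have : (t*t₀ - 1) * (t*t₀ + 1) = 0 := by linear_combination h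
          rcases mul_eq_zero.mp this with h | h
          · right; right; left
            field_simp
            linarith
          · right; right; right
            field_simp
            rw [Set.mem_singleton_iff]
            field_simp
            linear_combination h
      · intro ht
        have ht₀e' : 3*t₀^4 + 10*t₀^2 + 3 + 4*c*(t₀^2 - 1)^2 = 0 := ht₀e
        rcases ht with rfl | rfl | rfl | rfl
        · exact ⟨ht₀1, ht₀e⟩
        · constructor
          · intro h; apply ht₀1; nlinarith
          · nlinarith
        · constructor
          · intro h; apply ht₀1
            field_simp at h
            nlinarith [sq_nonneg t₀]
          · field_simp
            linear_combination ht₀e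
        · constructor
          · intro h; apply ht₀1
            field_simp at h
            nlinarith [sq_nonneg t₀]
          · field_simp
            linear_combination ht₀e
    rw [hSeq]
    have h1 : t₀ ≠ -t₀ := by intro h; apply ht₀0; linarith
    have h2 : t₀ ≠ t₀⁻¹ := by
      intro h; apply ht₀1; field_simp at h; nlinarith
    have h3 : t₀ ≠ -t₀⁻¹ := by
      intro h; apply hsq; field_simp at h; nlinarith
    have h4 : -t₀ ≠ t₀⁻¹ := by
      intro h; apply hsq
      have : t₀ = -t₀⁻¹ := by linarith
      field_simp at this; nlinarith
    have h5 : -t₀ ≠ -t₀⁻¹ := by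
      intro h
      apply h2; have : t₀ = t₀⁻¹ := by linarith
      exact this
    have h6 : t₀⁻¹ ≠ -t₀⁻¹ := by
      intro h
      have : t₀⁻¹ = 0 := by linarith
      exact ht₀0 (inv_eq_zero.mp this)
    rw [show ({t₀, -t₀, t₀⁻¹, -t₀⁻¹} : Set ℚ) = ↑({t₀, -t₀, t₀⁻¹, -t₀⁻¹} : Finset ℚ) by simp]
    rw [Set.ncard_coe_finset]
    rw [Finset.card_insert_of_notMem (by simp [h1, h2, h3]),
        Finset.card_insert_of_notMem (by simp [h4, h5]),
        Finset.card_insert_of_notMem (by simp [h6])]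
    simp
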